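/- sup_{v∈𝒱̄} | Σ_{j=0}^{T−1} μ̃_j(v) | ≤ π·B·U₁. (First bound of Lemma 2 of the paper.) -/

import Mathlib

open Complex Real

/-- `A_m := sup{ |sin(πν)|/(πν) : ν ∈ [m, m+1] }`. -/
noncomputable def sideLobeBound (m : ℕ) : ℝ :=
  ⨆ ν ∈ Set.Icc (m : ℝ) ((m : ℝ) + 1), |Real.sin (Real.pi * ν)| / (Real.pi * ν)

/-- `U₁ := Σ_{j=0}^{⌊(n−2g−1)/(4g)⌋} A_{(2j+1)g}`. -/
noncomputable def leakageU₁ (n g : ℕ) : ℝ :=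
  ∑ j ∈ Finset.Icc (0 : ℤ) ⌊((n : ℝ) - 2 * g - 1) / (4 * g)⌋,
    sideLobeBound ((2 * j + 1).toNat * g)

lemma sinc_le_one {m : ℕ} (hm : 1 ≤ m) {ν : ℝ} (hν : (m : ℝ) ≤ ν) :
    |Real.sin (Real.pi * ν)| / (Real.pi * ν) ≤ 1 := by
  have h1 : (1 : ℝ) ≤ ν := le_trans (by exact_mod_cast hm) hν
  have h2 : (1 : ℝ) ≤ Real.pi * ν := by nlinarith [Real.pi_gt_three]
  rw [div_le_one (by linarith)]
  exact le_trans (Real.abs_sin_le_one _) h2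
  
lemma sideLobeBound_bdd (m : ℕ) (hm : 1 ≤ m) :
    ∀ ν : ℝ, (⨆ _ : ν ∈ Set.Icc (m : ℝ) ((m : ℝ) + 1),
      |Real.sin (Real.pi * ν)| / (Real.pi * ν)) ≤ 1 := by
  intro ν
  exact Real.iSup_le (fun h => sinc_le_one hm h.1) zero_le_one

lemma le_sideLobeBound {m : ℕ} (hm : 1 ≤ m) {ν : ℝ}
    (hν : ν ∈ Set.Icc (m : ℝ) ((m : ℝ) + 1)) :
    |Real.sin (Real.pi * ν)| / (Real.pi * ν) ≤ sideLobeBound m := by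
  have hb : BddAbove (Set.range fun ν : ℝ => ⨆ _ : ν ∈ Set.Icc (m : ℝ) ((m : ℝ) + 1),
      |Real.sin (Real.pi * ν)| / (Real.pi * ν)) :=
    ⟨1, by rintro x ⟨ν, rfl⟩; exact sideLobeBound_bdd m hm ν⟩
  have := le_ciSup hb ν
  rw [ciSup_pos hν] at this
  exact this

lemma sideLobeBound_nonneg (m : ℕ) : 0 ≤ sideLobeBound m := by
  apply Real.iSup_nonneg
  intro ν
  apply Real.iSup_nonneg
  intro hν
  have : 0 ≤ ν := le_trans (Nat.cast_nonneg m) hν.1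
  positivity

lemma sideLobeBound_antitone {m m' : ℕ} (h1 : 1 ≤ m) (h : m ≤ m') :
    sideLobeBound m' ≤ sideLobeBound m := by
  apply Real.iSup_le _ (sideLobeBound_nonneg m)
  intro ν
  apply Real.iSup_le _ (sideLobeBound_nonneg m)
  intro hν
  set c : ℝ := (m' : ℝ) - (m : ℝ) with hc
  have hc0 : 0 ≤ c := by simp [hc]; exact_mod_cast h
  have hcint : ∃ k : ℤ, c = k := ⟨(m' : ℤ) - m, by push_cast [hc]; ring⟩
  obtain ⟨k, hk⟩ := hcint
  have hmem : ν - c ∈ Set.Icc (m : ℝ) ((m : ℝ) + 1) := by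
    constructor
    · have := hν.1; simp [hc]; linarith
    · have := hν.2; simp [hc]; linarith
  have hsin : |Real.sin (Real.pi * ν)| = |Real.sin (Real.pi * (ν - c))| := by
    have : Real.pi * ν = Real.pi * (ν - c) + k * Real.pi := by rw [← hk]; ring
    rw [this, Real.sin_add_int_mul_pi]
    have hk1 : |(-1 : ℝ) ^ k| = 1 := by
      rcases Int.even_or_odd k with he | ho
      · rw [he.neg_one_zpow]; norm_num
      · rw [ho.neg_one_zpow]; norm_num
    rw [abs_mul, hk1, one_mul]
  have hν1 : (1 : ℝ) ≤ ν - c := le_trans (by exact_mod_cast h1) hmem.1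
  have hstep : |Real.sin (Real.pi * ν)| / (Real.pi * ν) ≤
      |Real.sin (Real.pi * (ν - c))| / (Real.pi * (ν - c)) := by
    rw [hsin]
    apply div_le_div_of_nonneg_left (abs_nonneg _)
    · positivity
    · have : 0 < Real.pi := Real.pi_pos
      nlinarith
  exact hstep.trans (le_sideLobeBound h1 hmem)

lemma sinc_le_sideLobeBound {m : ℕ} (hm : 1 ≤ m) {ν : ℝ} (hν : (m : ℝ) ≤ ν) :
    |Real.sin (Real.pi * ν)| / (Real.pi * ν) ≤ sideLobeBound m := by
  have h0 : 0 < ν := lt_of_lt_of_le (by exact_mod_cast hm) hν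
  set m' := ⌊ν⌋₊ with hm'
  have hmm' : m ≤ m' := Nat.le_floor hν
  have hmem : ν ∈ Set.Icc (m' : ℝ) ((m' : ℝ) + 1) :=
    ⟨Nat.floor_le h0.le, (Nat.lt_floor_add_one ν).le⟩
  exact (le_sideLobeBound (le_trans hm hmm') hmem).trans
    (sideLobeBound_antitone hm hmm')

lemma abs_exp_two_pi_mul_sub_one (x : ℝ) :
    ‖Complex.exp (2 * Real.pi * Complex.I * x) - 1‖
      = 2 * |Real.sin (Real.pi * x)| := by
  have h2 : Complex.exp (2 * (Real.pi : ℂ) * Complex.I * (x : ℂ)) - 1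
      = Complex.exp (((Real.pi * x : ℝ) : ℂ) * Complex.I) *
        (Complex.exp (((Real.pi * x : ℝ) : ℂ) * Complex.I) -
          Complex.exp (-(((Real.pi * x : ℝ) : ℂ) * Complex.I))) := by
    rw [mul_sub, ← Complex.exp_add, ← Complex.exp_add, add_neg_cancel, Complex.exp_zero]
    congr 1
    push_cast
    ring
  rw [h2, norm_mul, Complex.norm_exp_ofReal_mul_I, one_mul]
  have h3 : Complex.exp (((Real.pi * x : ℝ) : ℂ) * Complex.I) -
      Complex.exp (-(((Real.pi * x : ℝ) : ℂ) * Complex.I))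
      = 2 * ((Real.sin (Real.pi * x) : ℝ) : ℂ) * Complex.I := by
    rw [show -((((Real.pi * x : ℝ)) : ℂ) * Complex.I)
        = ((-(Real.pi * x) : ℝ) : ℂ) * Complex.I by push_cast; ring,
      Complex.exp_mul_I, Complex.exp_mul_I]
    push_cast
    rw [Complex.cos_neg, Complex.sin_neg]
    ring
  rw [h3]
  rw [norm_mul, norm_mul, Complex.norm_I, Complex.norm_real, Real.norm_eq_abs, mul_one]
  norm_num

lemma abs_exp_sum (n : ℕ) (θ : ℝ)
    (hθ : Complex.exp (2 * Real.pi * Complex.I * θ) ≠ 1) :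
    ‖∑ t : Fin n, Complex.exp (2 * Real.pi * Complex.I * θ * ((t : ℕ) + 1))‖
      = |Real.sin (Real.pi * (n * θ))| / |Real.sin (Real.pi * θ)| := by
  set z := Complex.exp (2 * Real.pi * Complex.I * θ) with hz
  have hterm : ∀ t : ℕ, Complex.exp (2 * Real.pi * Complex.I * θ * ((t : ℕ) + 1))
      = z ^ (t + 1) := by
    intro t
    rw [hz, ← Complex.exp_nat_mul]
    congr 1
    push_cast
    ring
  have hsum : (∑ t : Fin n, Complex.exp (2 * Real.pi * Complex.I * θ * ((t : ℕ) + 1)))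
      = (z ^ n - 1) / (z - 1) * z := by
    calc (∑ t : Fin n, Complex.exp (2 * Real.pi * Complex.I * θ * ((t : ℕ) + 1)))
        = ∑ t : Fin n, z ^ ((t : ℕ) + 1) := by
          apply Finset.sum_congr rfl; intro t _; exact hterm t
      _ = ∑ i ∈ Finset.range n, z ^ (i + 1) := Fin.sum_univ_eq_sum_range (fun i => z ^ (i + 1)) n
      _ = ∑ i ∈ Finset.range n, z ^ i * z := by
          apply Finset.sum_congr rfl; intro i _; rw [pow_succ]
      _ = (∑ i ∈ Finset.range n, z ^ i) * z := by rw [← Finset.sum_mul]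
      _ = (z ^ n - 1) / (z - 1) * z := by rw [geom_sum_eq hθ]
  rw [hsum, norm_mul, norm_div]
  have habsz : ‖z‖ = 1 := by
    rw [hz, Complex.norm_exp]
    have : (2 * (Real.pi : ℂ) * Complex.I * (θ : ℂ)).re = 0 := by simp
    rw [this, Real.exp_zero]
  have hzn : z ^ n - 1 = Complex.exp (2 * Real.pi * Complex.I * ((n * θ : ℝ) : ℂ)) - 1 := by
    rw [hz, ← Complex.exp_nat_mul]
    congr 1
    push_cast
    ring
  have h1 : ‖z ^ n - 1‖ = 2 * |Real.sin (Real.pi * (n * θ))| := by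
    rw [hzn, abs_exp_two_pi_mul_sub_one]
  have h2 : ‖z - 1‖ = 2 * |Real.sin (Real.pi * θ)| := by
    rw [hz, abs_exp_two_pi_mul_sub_one]
  rw [h1, h2, habsz, mul_one]
  rw [mul_div_mul_left _ _ (two_ne_zero)]

lemma abs_sin_pi_int_shift (y : ℝ) (k : ℤ) :
    |Real.sin (Real.pi * (y + k))| = |Real.sin (Real.pi * y)| := by
  have : Real.pi * (y + k) = Real.pi * y + k * Real.pi := by ring
  rw [this, Real.sin_add_int_mul_pi, abs_mul]
  have hk1 : |(-1 : ℝ) ^ k| = 1 := by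
    rcases Int.even_or_odd k with he | ho
    · rw [he.neg_one_zpow]; norm_num
    · rw [ho.neg_one_zpow]; norm_num
  rw [hk1, one_mul]

lemma abs_sin_abs (y : ℝ) : |Real.sin (Real.pi * y)| = |Real.sin (Real.pi * |y|)| := by
  rcases abs_cases y with ⟨h, _⟩ | ⟨h, _⟩
  · rw [h]
  · rw [h, show Real.pi * -y = -(Real.pi * y) by ring, Real.sin_neg, abs_neg]

lemma mu_term_bound (n : ℕ) (hn : 0 < n) (c : ℂ) (θ δ : ℝ) (e : ℤ)
    (he : θ = δ + e) (hd0 : 0 < |δ|) (hd2 : |δ| ≤ 1 / 2) :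
    ‖(1 / (n : ℂ)) *
        ∑ t : Fin n, c * Complex.exp (2 * Real.pi * Complex.I * θ * ((t : ℕ) + 1))‖
      ≤ ‖c‖ * (Real.pi / 2) *
        (|Real.sin (Real.pi * (n * |δ|))| / (Real.pi * (n * |δ|))) := by
  have hπ := Real.pi_pos
  have hn' : (0 : ℝ) < n := by exact_mod_cast hn
  -- exp(2πiθ) ≠ 1
  have hθ : Complex.exp (2 * Real.pi * Complex.I * θ) ≠ 1 := by
    intro hcon
    rw [Complex.exp_eq_one_iff] at hcon
    obtain ⟨k, hk⟩ := hcon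
    have h2πI : ((2 : ℂ) * Real.pi * Complex.I) ≠ 0 := by
      simp [Complex.I_ne_zero, Real.pi_ne_zero]
    have hθk : (θ : ℂ) = (k : ℂ) := by
      apply mul_left_cancel₀ h2πI
      rw [show ((2 : ℂ) * Real.pi * Complex.I) * θ = 2 * Real.pi * Complex.I * θ by ring, hk]
      ring
    have hθk' : θ = (k : ℝ) := by exact_mod_cast hθk
    have hδk : δ = ((k - e : ℤ) : ℝ) := by push_cast; rw [← hθk']; linarith [he]
    rcases eq_or_ne (k - e) 0 with h0 | h0
    · rw [hδk, h0] at hd0; norm_num at hd0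
    · have := Int.one_le_abs h0
      have : (1 : ℝ) ≤ |((k - e : ℤ) : ℝ)| := by
        rw [← Int.cast_abs]; exact_mod_cast this
      rw [← hδk] at this
      linarith
  -- factor out c
  have hfac : (∑ t : Fin n, c * Complex.exp (2 * Real.pi * Complex.I * θ * ((t : ℕ) + 1)))
      = c * ∑ t : Fin n, Complex.exp (2 * Real.pi * Complex.I * θ * ((t : ℕ) + 1)) :=
    (Finset.mul_sum _ _ _).symm
  rw [hfac, norm_mul, norm_mul, abs_exp_sum n θ hθ]
  have habs1n : ‖1 / (n : ℂ)‖ = 1 / (n : ℝ) := by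
    rw [norm_div, norm_one, Complex.norm_natCast]
  rw [habs1n]
  -- rewrite |sin πθ| and |sin π n θ| in terms of |δ|
  have hsθ : |Real.sin (Real.pi * θ)| = |Real.sin (Real.pi * |δ|)| := by
    rw [he, abs_sin_pi_int_shift δ e, abs_sin_abs]
  have hsnθ : |Real.sin (Real.pi * (n * θ))| = |Real.sin (Real.pi * (n * |δ|))| := by
    have h1 : (n : ℝ) * θ = n * δ + (n * e : ℤ) := by rw [he]; push_cast; ring
    rw [h1, abs_sin_pi_int_shift, abs_sin_abs (n * δ)]
    congr 2
    rw [abs_mul, Nat.abs_cast]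
  rw [hsθ, hsnθ]
  -- sin(π|δ|) ≥ 2|δ|
  have hsin_lb : 2 * |δ| ≤ Real.sin (Real.pi * |δ|) := by
    have := Real.mul_le_sin (x := Real.pi * |δ|) (by positivity)
      (by nlinarith [abs_nonneg δ])
    calc 2 * |δ| = 2 / Real.pi * (Real.pi * |δ|) := by field_simp
      _ ≤ Real.sin (Real.pi * |δ|) := this
  have hsinδ_pos : 0 < Real.sin (Real.pi * |δ|) := by linarith
  have habs_sinδ : |Real.sin (Real.pi * |δ|)| = Real.sin (Real.pi * |δ|) :=
    abs_of_pos hsinδ_pos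
  rw [habs_sinδ]
  -- final algebra
  have key : (1 : ℝ) / n * |Real.sin (Real.pi * (n * |δ|))| / Real.sin (Real.pi * |δ|)
      ≤ (Real.pi / 2) * (|Real.sin (Real.pi * (n * |δ|))| / (Real.pi * (n * |δ|))) := by
    have hL : (1 : ℝ) / n * |Real.sin (Real.pi * (n * |δ|))| / Real.sin (Real.pi * |δ|)
        ≤ 1 / n * |Real.sin (Real.pi * (n * |δ|))| / (2 * |δ|) := by
      apply div_le_div_of_nonneg_left _ (by positivity) hsin_lb
      positivity
    have hR : 1 / (n : ℝ) * |Real.sin (Real.pi * (n * |δ|))| / (2 * |δ|)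
        = (Real.pi / 2) * (|Real.sin (Real.pi * (n * |δ|))| / (Real.pi * (n * |δ|))) := by
      field_simp
    rw [hR] at hL
    exact hL
  calc (1 : ℝ) / n * (‖c‖ *
        (|Real.sin (Real.pi * (n * |δ|))| / Real.sin (Real.pi * |δ|)))
      = ‖c‖ * ((1 : ℝ) / n * |Real.sin (Real.pi * (n * |δ|))|
          / Real.sin (Real.pi * |δ|)) := by ring
    _ ≤ ‖c‖ * ((Real.pi / 2) *
          (|Real.sin (Real.pi * (n * |δ|))| / (Real.pi * (n * |δ|)))) := by
        apply mul_le_mul_of_nonneg_left key (norm_nonneg c)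
    _ = ‖c‖ * (Real.pi / 2) *
          (|Real.sin (Real.pi * (n * |δ|))| / (Real.pi * (n * |δ|))) := by ring

lemma exp_sum_zero (n : ℕ) (hn : Even n) (z : ℂ) (m : ℤ)
    (hz : 2 * z = m) (hm : Odd m) :
    ∑ t : Fin n, Complex.exp (2 * Real.pi * Complex.I * z * ((t : ℕ) + 1)) = 0 := by
  have hterm : ∀ t : ℕ,
      Complex.exp (2 * Real.pi * Complex.I * z * ((t : ℕ) + 1)) = (-1 : ℂ) ^ (t + 1) := by
    intro t
    have hexp : 2 * (Real.pi : ℂ) * Complex.I * z * ((t : ℕ) + 1)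
        = ((m * ((t : ℕ) + 1) : ℤ) : ℂ) * (Real.pi * Complex.I) := by
      push_cast
      rw [← hz]
      ring
    rw [hexp, Complex.exp_int_mul, Complex.exp_pi_mul_I]
    rcases Nat.even_or_odd t with he | ho
    · have h1 : Odd ((t : ℕ) + 1) := Even.add_one he
      have h2 : Odd (m * ((t : ℕ) + 1 : ℤ)) := hm.mul (by exact_mod_cast h1)
      rw [h2.neg_one_zpow, h1.neg_one_pow]
    · have h1 : Even ((t : ℕ) + 1) := Odd.add_one ho
      have h2 : Even (m * ((t : ℕ) + 1 : ℤ)) := (by exact_mod_cast h1 : Even (((t : ℕ) + 1 : ℤ))).mul_left m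
      rw [h2.neg_one_zpow, h1.neg_one_pow]
  calc (∑ t : Fin n, Complex.exp (2 * Real.pi * Complex.I * z * ((t : ℕ) + 1)))
      = ∑ t : Fin n, (-1 : ℂ) ^ ((t : ℕ) + 1) := by
        apply Finset.sum_congr rfl; intro t _; exact hterm t
    _ = ∑ i ∈ Finset.range n, (-1 : ℂ) ^ (i + 1) :=
        Fin.sum_univ_eq_sum_range (fun i => (-1 : ℂ) ^ (i + 1)) n
    _ = (∑ i ∈ Finset.range n, (-1 : ℂ) ^ i) * (-1) := by
        rw [Finset.sum_mul]
        apply Finset.sum_congr rfl; intro i _; rw [pow_succ]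
    _ = 0 := by rw [neg_one_geom_sum]; simp [hn]

set_option maxHeartbeats 2000000 in
lemma key_bound (n g T : ℕ) (hn : 0 < n) (hg1 : 1 ≤ g) (hT : 0 < T)
    (hTn : (T : ℝ) < n / (2 * g))
    (b : ℕ → ℂ) (μdft : ℕ → ℝ → ℂ)
    (hμdft : ∀ j v, μdft j v = (1 / (n : ℂ)) *
        ∑ t : Fin n, b j *
          Complex.exp (2 * Real.pi * Complex.I * ((j : ℝ) / T - v) * ((t : ℕ) + 1)))
    (B : ℝ) (hB0 : 0 ≤ B) (hB : ∀ j, j < T → b j ≠ 0 → ‖b j‖ ≤ B)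
    (v : ℝ) (hv0 : 0 ≤ v) (hv2 : v ≤ 1 / 2)
    (hvV : ∀ j, j < T → b j ≠ 0 → (g : ℝ) / n < |(j : ℝ) / T - v|) :
    ‖∑ j ∈ Finset.range T, μdft j v‖ ≤ Real.pi * B * leakageU₁ n g := by
  have hπ := Real.pi_pos
  have hn' : (0 : ℝ) < n := by exact_mod_cast hn
  have hg' : (0 : ℝ) < g := by exact_mod_cast hg1
  have hT' : (0 : ℝ) < T := by exact_mod_cast hT
  have h2gn : 2 * (g : ℝ) / n < 1 / T := by
    rw [div_lt_div_iff₀ hn' hT']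
    rw [lt_div_iff₀ (by positivity)] at hTn
    nlinarith
  -- definitions
  set θ : ℕ → ℝ := fun j => (j : ℝ) / T - v with hθdef
  set e : ℕ → ℤ := fun j => if θ j ≤ 1 / 2 then 0 else 1 with hedef
  set δ : ℕ → ℝ := fun j => θ j - e j with hδdef
  set d : ℕ → ℝ := fun j => |δ j| with hddef
  set k : ℕ → ℕ := fun j => ⌊((n : ℝ) * d j - g) / (2 * g)⌋₊ with hkdef
  set K : ℤ := ⌊((n : ℝ) - 2 * g - 1) / (4 * g)⌋ with hKdef
  set S : Finset ℕ := (Finset.range T).filter (fun j => μdft j v ≠ 0) with hSdef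
  have hθj : ∀ j, θ j = (j : ℝ) / T - v := fun j => by rw [hθdef]
  have hej : ∀ j, e j = if θ j ≤ 1 / 2 then 0 else 1 := fun j => by rw [hedef]
  have hδj : ∀ j, δ j = θ j - e j := fun j => by rw [hδdef]
  have hdj : ∀ j, d j = |δ j| := fun j => by rw [hddef]
  have hkj : ∀ j, k j = ⌊((n : ℝ) * d j - g) / (2 * g)⌋₊ := fun j => by rw [hkdef]
  clear_value θ e δ d k K S
  have hee : ∀ j, e j = 0 ∨ e j = 1 := by
    intro j; rw [hej j]; split <;> simp
  have hθδ : ∀ j, θ j = δ j + e j := by intro j; rw [hδj j]; ring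
  have hbS : ∀ j ∈ S, j < T ∧ b j ≠ 0 := by
    intro j hj
    rw [hSdef, Finset.mem_filter, Finset.mem_range] at hj
    refine ⟨hj.1, fun hb => hj.2 ?_⟩
    rw [hμdft]
    simp [hb]
  -- bounds on d
  have hdbound : ∀ j ∈ S, (g : ℝ) / n < d j ∧ d j ≤ 1 / 2 := by
    intro j hj
    obtain ⟨hjT, hjb⟩ := hbS j hj
    have hθlb : -(1 / 2 : ℝ) ≤ θ j := by
      rw [hθdef]; dsimp only
      have : (0 : ℝ) ≤ (j : ℝ) / T := by positivity
      linarith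
    have hθub : θ j < 1 := by
      rw [hθdef]; dsimp only
      have : (j : ℝ) / T < 1 := by
        rw [div_lt_one hT']; exact_mod_cast hjT
      linarith
    have hvj := hvV j hjT hjb
    rw [hdj j, hδj j, hej j]
    split_ifs with h12
    · simp only [Int.cast_zero, sub_zero]
      constructor
      · rw [hθj j]; exact hvj
      · rw [abs_le]; exact ⟨by linarith, h12⟩
    · push_neg at h12
      have hδval : |θ j - ((1 : ℤ) : ℝ)| = 1 - θ j := by
        rw [abs_of_nonpos (by push_cast; linarith)]; push_cast; ring
      constructor
      · rw [hδval]
        have hj1 : (j : ℝ) ≤ T - 1 := by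
          have : j + 1 ≤ T := hjT
          have := (Nat.cast_le (α := ℝ)).2 this
          push_cast at this
          linarith
        have h1T : 1 / (T : ℝ) ≤ 1 - θ j := by
          rw [div_le_iff₀ hT', hθj j]
          have hjj : (j : ℝ) / T * T = j := by field_simp
          nlinarith [hjj]
        have : (g : ℝ) / n < 2 * g / n := by
          rw [div_lt_div_iff₀ hn' hn']; nlinarith
        linarith [h2gn]
      · rw [hδval]; linarith
  have hdpos : ∀ j ∈ S, 0 < d j := fun j hj =>
    lt_trans (by positivity) (hdbound j hj).1
  have hkle : ∀ j ∈ S, (((2 * k j + 1) * g : ℕ) : ℝ) ≤ (n : ℝ) * d j := by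
    intro j hj
    have hgd : (g : ℝ) < n * d j := by
      have := (hdbound j hj).1
      rw [div_lt_iff₀ hn'] at this
      linarith
    have h0 : (0 : ℝ) ≤ ((n : ℝ) * d j - g) / (2 * g) :=
      div_nonneg (by linarith) (by positivity)
    have hfl : ((k j : ℕ) : ℝ) ≤ ((n : ℝ) * d j - g) / (2 * g) := by
      rw [hkj j]; exact Nat.floor_le h0
    rw [le_div_iff₀ (by positivity)] at hfl
    push_cast
    nlinarith
  have hterm : ∀ j ∈ S, ‖μdft j v‖
      ≤ B * (Real.pi / 2) * sideLobeBound ((2 * k j + 1) * g) := by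
    intro j hj
    have hd1 := (hdbound j hj).1
    have hd2 : |δ j| ≤ 1 / 2 := by rw [← hdj j]; exact (hdbound j hj).2
    have hd0 : 0 < |δ j| := by rw [← hdj j]; exact hdpos j hj
    have hstep := mu_term_bound n hn (b j) ((j : ℝ) / T - v) (δ j) (e j)
      (by rw [← hθj j]; exact hθδ j) hd0 hd2
    have hm1 : 1 ≤ (2 * k j + 1) * g := Nat.mul_pos (by omega) hg1
    have hsinc : |Real.sin (Real.pi * ((n : ℝ) * |δ j|))| / (Real.pi * ((n : ℝ) * |δ j|))
        ≤ sideLobeBound ((2 * k j + 1) * g) := by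
      apply sinc_le_sideLobeBound hm1
      have hmcast := hkle j hj
      rw [hdj j] at hmcast
      exact_mod_cast hmcast
    have hbB : ‖b j‖ ≤ B := hB j (hbS j hj).1 (hbS j hj).2
    have hrest : ‖b j‖ * (Real.pi / 2) *
        (|Real.sin (Real.pi * ((n : ℝ) * |δ j|))| / (Real.pi * ((n : ℝ) * |δ j|)))
        ≤ B * (Real.pi / 2) * sideLobeBound ((2 * k j + 1) * g) := by
      apply mul_le_mul (mul_le_mul_of_nonneg_right hbB (by positivity)) hsinc
      · positivity
      · exact mul_nonneg hB0 (by positivity)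
    rw [hμdft]
    simp only [Complex.ofReal_sub, Complex.ofReal_div, Complex.ofReal_natCast] at hstep ⊢
    exact le_trans hstep hrest
  have hkK : ∀ j ∈ S, (k j : ℤ) ∈ Finset.Icc 0 K := by
    intro j hj
    rw [Finset.mem_Icc]
    refine ⟨by exact_mod_cast Nat.zero_le _, ?_⟩
    by_contra hcon
    push_neg at hcon
    have hx : ((n : ℝ) - 2 * g - 1) / (4 * g) < ((k j : ℤ) : ℝ) := by
      rw [hKdef] at hcon
      exact_mod_cast Int.floor_lt.1 hcon
    have hk1 : (((2 * k j + 1) * g : ℕ) : ℝ) ≤ (n : ℝ) * d j := hkle j hj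
    have hk1' : (2 * (k j : ℝ) + 1) * g ≤ (n : ℝ) * d j := by push_cast at hk1; linarith
    have hd2 := (hdbound j hj).2
    have hub : (n : ℝ) * d j ≤ (n : ℝ) / 2 := by
      calc (n : ℝ) * d j ≤ (n : ℝ) * (1 / 2) := mul_le_mul_of_nonneg_left hd2 hn'.le
        _ = (n : ℝ) / 2 := by ring
    have hk2 : 4 * (g : ℝ) * (k j) ≤ (n : ℝ) - 2 * g := by nlinarith [hk1', hub]
    have hk3 : (n : ℝ) - 2 * g - 1 < 4 * (g : ℝ) * (k j) := by
      rw [div_lt_iff₀ (by positivity)] at hx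
      push_cast at hx
      nlinarith [hx]
    -- integer pinching: 4 g k = n - 2 g
    obtain ⟨a, ha⟩ : ∃ a : ℕ, a = g * k j := ⟨_, rfl⟩
    have haR : (a : ℝ) = (g : ℝ) * (k j : ℝ) := by rw [ha]; push_cast; ring
    have hZ1 : (n : ℤ) - 2 * g - 1 < 4 * a := by
      have hr : (n : ℝ) - 2 * g - 1 < 4 * (a : ℝ) := by rw [haR]; linarith [hk3]
      exact_mod_cast hr
    have hZ2 : (4 * a : ℤ) ≤ (n : ℤ) - 2 * g := by
      have hr : 4 * (a : ℝ) ≤ (n : ℝ) - 2 * g := by rw [haR]; linarith [hk2]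
      exact_mod_cast hr
    have hnat : n = 4 * a + 2 * g := by omega
    have hneven : Even n := ⟨2 * a + g, by omega⟩
    -- d j = 1 / 2
    have hnR : (n : ℝ) = 4 * (a : ℝ) + 2 * g := by exact_mod_cast hnat
    have hhalf : (2 * ((k j : ℕ) : ℝ) + 1) * g = (n : ℝ) / 2 := by
      rw [hnR]; linear_combination (-2 : ℝ) * haR
    have hd12 : d j = 1 / 2 := by
      have hnd : (n : ℝ) / 2 ≤ (n : ℝ) * d j := by rw [← hhalf]; linarith [hk1']
      have heq : (n : ℝ) * d j = (n : ℝ) * (1 / 2) := by linarith [hub, hnd]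
      exact mul_left_cancel₀ (ne_of_gt hn') heq
    -- contradiction: μdft j v = 0
    have hdabs : |δ j| = 1 / 2 := by rw [← hdj j]; exact hd12
    have hm : ∃ m : ℤ, Odd m ∧ 2 * θ j = (m : ℝ) := by
      rcases (abs_eq (by norm_num : (0 : ℝ) ≤ 1 / 2)).1 hdabs with h | h
      · exact ⟨2 * e j + 1, odd_two_mul_add_one _, by rw [hθδ j, h]; push_cast; ring⟩
      · exact ⟨2 * e j - 1, ⟨e j - 1, by ring⟩, by rw [hθδ j, h]; push_cast; ring⟩
    obtain ⟨m, hmodd, hmθ⟩ := hm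
    rw [hSdef, Finset.mem_filter] at hj
    apply hj.2
    rw [hμdft]
    have hfac2 : (∑ t : Fin n, b j *
        Complex.exp (2 * Real.pi * Complex.I * ((j : ℝ) / T - v) * ((t : ℕ) + 1)))
        = b j * ∑ t : Fin n,
            Complex.exp (2 * Real.pi * Complex.I * ((j : ℝ) / T - v) * ((t : ℕ) + 1)) :=
      (Finset.mul_sum _ _ _).symm
    have hsz : (∑ t : Fin n,
        Complex.exp (2 * Real.pi * Complex.I * ((j : ℝ) / T - v) * ((t : ℕ) + 1))) = (0 : ℂ) := by
      apply exp_sum_zero n hneven _ m _ hmodd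
      have h2θ : 2 * ((j : ℝ) / T - v) = (m : ℝ) := by rw [← hθj j]; exact hmθ
      exact_mod_cast h2θ
    rw [hfac2, hsz, mul_zero, mul_zero]
  -- counting: at most two j per shell
  have hup : ∀ j ∈ S, (n : ℝ) * d j < (2 * (k j : ℝ) + 3) * g := by
    intro j hj
    have hfl : ((n : ℝ) * d j - g) / (2 * g) < k j + 1 := by
      rw [hkj j]; exact Nat.lt_floor_add_one _
    rw [div_lt_iff₀ (by positivity)] at hfl
    nlinarith [hfl]
  have hcard : ∀ K' : ℤ, ((S.filter fun j => (k j : ℤ) = K').card) ≤ 2 := by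
    intro K'
    have h2 : ((Finset.univ : Finset Bool)).card = 2 := by simp
    rw [← h2]
    apply Finset.card_le_card_of_injOn (fun j => decide (0 < δ j))
      (fun j _ => Finset.mem_univ _)
    intro j1 hj1 j2 hj2 hsign
    by_contra hne
    rw [Finset.mem_coe, Finset.mem_filter] at hj1 hj2
    obtain ⟨hj1S, hk1eq⟩ := hj1
    obtain ⟨hj2S, hk2eq⟩ := hj2
    have hkk : k j2 = k j1 := by omega
    -- both distances in the same shell of width 2g
    have hb1l := hkle j1 hj1S
    have hb2l := hkle j2 hj2S
    have hb1u := hup j1 hj1S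
    have hb2u := hup j2 hj2S
    rw [hkk] at hb2l hb2u
    push_cast at hb1l hb2l
    have hdd : |d j1 - d j2| < 2 * (g : ℝ) / n := by
      rw [abs_sub_lt_iff]
      constructor
      · rw [lt_div_iff₀ hn']; nlinarith [hb1u, hb2l]
      · rw [lt_div_iff₀ hn']; nlinarith [hb2u, hb1l]
    have hiff : (0 < δ j1) ↔ (0 < δ j2) := by simpa using hsign
    have hδ1ne : δ j1 ≠ 0 := by
      have := hdpos j1 hj1S; rw [hdj j1] at this; exact abs_pos.1 this
    have hδ2ne : δ j2 ≠ 0 := by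
      have := hdpos j2 hj2S; rw [hdj j2] at this; exact abs_pos.1 this
    have habs_eq : |δ j1 - δ j2| = |d j1 - d j2| := by
      rw [hdj j1, hdj j2]
      by_cases hp : 0 < δ j1
      · have hp2 : 0 < δ j2 := hiff.1 hp
        rw [abs_of_pos hp, abs_of_pos hp2]
      · have hp2 : ¬ 0 < δ j2 := fun h => hp (hiff.2 h)
        have hn1 : δ j1 < 0 := lt_of_le_of_ne (not_lt.1 hp) hδ1ne
        have hn2 : δ j2 < 0 := lt_of_le_of_ne (not_lt.1 hp2) hδ2ne
        rw [abs_of_neg hn1, abs_of_neg hn2,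
          show -δ j1 - -δ j2 = -(δ j1 - δ j2) by ring, abs_neg]
    have hM : ∃ M : ℤ, M ≠ 0 ∧ δ j1 - δ j2 = (M : ℝ) / T := by
      refine ⟨(j1 : ℤ) - j2 - (e j1 - e j2) * T, ?_, ?_⟩
      · have h1T := (hbS j1 hj1S).1
        have h2T := (hbS j2 hj2S).1
        rcases hee j1 with h1 | h1 <;> rcases hee j2 with h2 | h2 <;>
          rw [h1, h2] <;> omega
      · rw [hδj j1, hδj j2, hθj j1, hθj j2]
        push_cast
        field_simp
        ring
    obtain ⟨M, hM0, hMval⟩ := hM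
    have h1M : (1 : ℝ) ≤ |(M : ℝ)| := by exact_mod_cast Int.one_le_abs hM0
    have hlow : 1 / (T : ℝ) ≤ |δ j1 - δ j2| := by
      rw [hMval, abs_div, abs_of_pos hT', div_le_div_iff₀ hT' hT']
      nlinarith [h1M]
    rw [habs_eq] at hlow
    linarith [h2gn, hdd, hlow]
  -- assembly
  have habs : ‖∑ j ∈ Finset.range T, μdft j v‖
      ≤ ∑ j ∈ S, ‖μdft j v‖ := by
    refine le_trans (norm_sum_le _ _) (le_of_eq ?_)
    rw [hSdef]
    refine (Finset.sum_subset (Finset.filter_subset _ _) ?_).symm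
    intro x hx hnx
    rw [Finset.mem_filter] at hnx
    have : μdft x v = 0 := by
      by_contra hc
      exact hnx ⟨hx, hc⟩
    rw [this, norm_zero]
  have hsum2 : ∑ j ∈ S, ‖μdft j v‖
      ≤ ∑ j ∈ S, (B * (Real.pi / 2) * sideLobeBound ((2 * k j + 1) * g)) :=
    Finset.sum_le_sum hterm
  have hfib : ∑ j ∈ S, (B * (Real.pi / 2) * sideLobeBound ((2 * k j + 1) * g))
      = ∑ K' ∈ Finset.Icc (0 : ℤ) K, ∑ j ∈ S.filter (fun j => (k j : ℤ) = K'),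
          (B * (Real.pi / 2) * sideLobeBound ((2 * k j + 1) * g)) :=
    (Finset.sum_fiberwise_of_maps_to hkK _).symm
  have hinner : ∀ K' ∈ Finset.Icc (0 : ℤ) K,
      (∑ j ∈ S.filter (fun j => (k j : ℤ) = K'),
        (B * (Real.pi / 2) * sideLobeBound ((2 * k j + 1) * g)))
      ≤ 2 * (B * (Real.pi / 2) * sideLobeBound ((2 * K' + 1).toNat * g)) := by
    intro K' _
    have hconst : ∀ j ∈ S.filter (fun j => (k j : ℤ) = K'),
        (B * (Real.pi / 2) * sideLobeBound ((2 * k j + 1) * g))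
        = B * (Real.pi / 2) * sideLobeBound ((2 * K' + 1).toNat * g) := by
      intro j hj
      rw [Finset.mem_filter] at hj
      have hkK' := hj.2
      have : (2 * K' + 1).toNat = 2 * k j + 1 := by omega
      rw [this]
    rw [Finset.sum_congr rfl hconst, Finset.sum_const, nsmul_eq_mul]
    have hpos : 0 ≤ B * (Real.pi / 2) * sideLobeBound ((2 * K' + 1).toNat * g) :=
      mul_nonneg (mul_nonneg hB0 (by positivity)) (sideLobeBound_nonneg _)
    apply mul_le_mul_of_nonneg_right _ hpos
    exact_mod_cast hcard K'
  calc ‖∑ j ∈ Finset.range T, μdft j v‖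
      ≤ ∑ j ∈ S, ‖μdft j v‖ := habs
    _ ≤ ∑ j ∈ S, (B * (Real.pi / 2) * sideLobeBound ((2 * k j + 1) * g)) := hsum2
    _ = ∑ K' ∈ Finset.Icc (0 : ℤ) K, ∑ j ∈ S.filter (fun j => (k j : ℤ) = K'),
          (B * (Real.pi / 2) * sideLobeBound ((2 * k j + 1) * g)) := hfib
    _ ≤ ∑ K' ∈ Finset.Icc (0 : ℤ) K,
          2 * (B * (Real.pi / 2) * sideLobeBound ((2 * K' + 1).toNat * g)) :=
        Finset.sum_le_sum hinner
    _ = Real.pi * B * leakageU₁ n g := by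
        unfold leakageU₁
        rw [← hKdef, Finset.mul_sum]
        apply Finset.sum_congr rfl
        intro x _
        ring

/-- First bound of Lemma 2 of the paper:
`sup_{v∈𝒱̄} | Σ_{j=0}^{T−1} μ̃_j(v) | ≤ π B U₁`, where `𝒱̄` is the part of
`[0,1/2]` outside the `g/n`-neighborhoods of the present frequencies. -/
theorem leakage_bound_outside_neighborhoods
    (n g T : ℕ) (hn : 0 < n) (hg2 : 2 ≤ g) (hgn : Real.sqrt n ≤ g)
    (hT : 0 < T) (hTn : (T : ℝ) < n / (2 * g))
    (b : ℕ → ℂ)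
    (hb0 : (b 0).im = 0)
    (hbconj : ∀ j, 1 ≤ j → j ≤ T - 1 → b j = starRingEnd ℂ (b (T - j)))
    (hbne : ∃ j < T, b j ≠ 0)
    (μdft : ℕ → ℝ → ℂ)
    (hμdft : ∀ j v, μdft j v = (1 / (n : ℂ)) *
        ∑ t : Fin n, b j *
          Complex.exp (2 * Real.pi * Complex.I * ((j : ℝ) / T - v) * ((t : ℕ) + 1)))
    (B : ℝ) (hB : IsGreatest {x : ℝ | ∃ j < T, b j ≠ 0 ∧ x = ‖b j‖} B)
    (V : Set ℝ)
    (hV : V = Set.Icc (0 : ℝ) (1 / 2) ∩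
        ⋃ j ∈ {j : ℕ | j < T ∧ b j ≠ 0},
          Set.Icc ((j : ℝ) / T - g / n) ((j : ℝ) / T + g / n)) :
    (⨆ v ∈ Set.Icc (0 : ℝ) (1 / 2) \ V,
        ‖∑ j ∈ Finset.range T, μdft j v‖) ≤
      Real.pi * B * leakageU₁ n g := by
  have hg1 : 1 ≤ g := le_trans (by norm_num) hg2
  have hU1 : 0 ≤ leakageU₁ n g := Finset.sum_nonneg fun _ _ => sideLobeBound_nonneg _
  have hB0 : 0 ≤ B := by
    obtain ⟨j, hj, hbj, hx⟩ := hB.1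
    rw [hx]
    exact norm_nonneg _
  have hRHS : 0 ≤ Real.pi * B * leakageU₁ n g :=
    mul_nonneg (mul_nonneg Real.pi_pos.le hB0) hU1
  apply Real.iSup_le _ hRHS
  intro v
  apply Real.iSup_le _ hRHS
  intro hv
  obtain ⟨⟨hv0, hv2⟩, hvV⟩ := hv
  apply key_bound n g T hn hg1 hT hTn b μdft hμdft B hB0
    (fun j hjT hbj => hB.2 ⟨j, hjT, hbj, rfl⟩) v hv0 hv2
  intro j hjT hbj
  by_contra hcon
  push_neg at hcon
  apply hvV
  rw [hV]
  refine ⟨⟨hv0, hv2⟩, ?_⟩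
  rw [Set.mem_iUnion₂]
  refine ⟨j, ⟨hjT, hbj⟩, ?_⟩
  rw [abs_le] at hcon
  exact ⟨by linarith [hcon.1], by linarith [hcon.2]⟩
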